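/- Let g_1,…,g_n ∈ ℝ^d with d ≥ 1. Then inf over symmetric positive definite d×d matrices H with trace at most d of Σ_{τ=1}^n g_τᵀ H⁻¹ g_τ is at most (1/d)·( Σ_{i=1}^d √( Σ_{τ=1}^n g_{τ,i}² ) )², where g_{τ,i} is the i-th coordinate of g_τ. -/

import Mathlib

open Finset Matrix RealInnerProductSpace

theorem full_matrix_inf_le_diagonal_quantity
    (d n : ℕ) (hd : 1 ≤ d) (g : Fin n → Fin d → ℝ) :
    sInf {v : ℝ | ∃ H : Matrix (Fin d) (Fin d) ℝ, H.PosDef ∧ H.trace ≤ (d : ℝ) ∧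
        v = ∑ τ, ∑ i, ∑ j, g τ i * H⁻¹ i j * g τ j} ≤
      (1 / d) * (∑ i, Real.sqrt (∑ τ, (g τ i) ^ 2)) ^ 2 := by
  set a : Fin d → ℝ := fun i => Real.sqrt (∑ τ, (g τ i) ^ 2) with ha
  set S : ℝ := ∑ i, a i with hSdef
  have ha0 : ∀ i, 0 ≤ a i := fun i => Real.sqrt_nonneg _
  have hS0 : 0 ≤ S := Finset.sum_nonneg fun i _ => ha0 i
  have hdpos : (0 : ℝ) < d := by exact_mod_cast hd
  -- bounded below by 0
  have hbdd : BddBelow {v : ℝ | ∃ H : Matrix (Fin d) (Fin d) ℝ, H.PosDef ∧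
      H.trace ≤ (d : ℝ) ∧ v = ∑ τ, ∑ i, ∑ j, g τ i * H⁻¹ i j * g τ j} := by
    refine ⟨0, fun v hv => ?_⟩
    obtain ⟨H, hH, -, rfl⟩ := hv
    have hinv : (H⁻¹).PosSemidef := hH.inv.posSemidef
    refine Finset.sum_nonneg fun τ _ => ?_
    have := hinv.dotProduct_mulVec_nonneg (g τ)
    simpa [dotProduct, Matrix.mulVec, dotProduct, Finset.mul_sum,
      mul_assoc] using this
  refine le_of_forall_pos_le_add fun ε hε => ?_
  set c : ℝ := ε / (S + 1) with hc
  have hSpos : (0:ℝ) < S + 1 := by linarith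
  have hcpos : 0 < c := div_pos hε hSpos
  set b : Fin d → ℝ := fun i => a i + c with hb
  have hbpos : ∀ i, 0 < b i := fun i => by have := ha0 i; simp [hb]; linarith
  set T : ℝ := S + d * c with hT
  have hTsum : T = ∑ i, b i := by
    simp [hT, hb, hSdef, Finset.sum_add_distrib, mul_comm]
  have hTpos : 0 < T := by positivity
  set h : Fin d → ℝ := fun i => d * b i / T with hh
  have hhpos : ∀ i, 0 < h i := fun i => by
    have := hbpos i; exact div_pos (by positivity) hTpos
  set H : Matrix (Fin d) (Fin d) ℝ := Matrix.diagonal h with hH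
  have hHpd : H.PosDef := Matrix.PosDef.diagonal hhpos
  have hHtr : H.trace ≤ (d : ℝ) := by
    rw [hH, Matrix.trace_diagonal]
    have : ∑ i, h i = d * (∑ i, b i) / T := by
      simp [hh, Finset.sum_div, Finset.mul_sum]
    rw [this, ← hTsum, mul_div_assoc, div_self hTpos.ne', mul_one]
  have hHinv : H⁻¹ = Matrix.diagonal (fun i => (h i)⁻¹) := by
    apply Matrix.inv_eq_right_inv
    rw [hH, Matrix.diagonal_mul_diagonal]
    convert Matrix.diagonal_one using 2
    exact funext fun i => mul_inv_cancel₀ (hhpos i).ne'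
  -- value of the quadratic form
  have hval : (∑ τ, ∑ i, ∑ j, g τ i * H⁻¹ i j * g τ j)
      = ∑ i, (∑ τ, (g τ i) ^ 2) * (h i)⁻¹ := by
    rw [hHinv, Finset.sum_comm]
    refine Finset.sum_congr rfl fun i _ => ?_
    rw [Finset.sum_mul]
    refine Finset.sum_congr rfl fun τ _ => ?_
    rw [Finset.sum_eq_single i]
    · simp [Matrix.diagonal_apply_eq]; ring
    · intro j _ hj
      simp [Matrix.diagonal_apply_ne' _ hj]
    · simp
  have hmem : (∑ i, (∑ τ, (g τ i) ^ 2) * (h i)⁻¹) ∈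
      {v : ℝ | ∃ H : Matrix (Fin d) (Fin d) ℝ, H.PosDef ∧ H.trace ≤ (d : ℝ) ∧
        v = ∑ τ, ∑ i, ∑ j, g τ i * H⁻¹ i j * g τ j} :=
    ⟨H, hHpd, hHtr, hval.symm⟩
  clear_value a S c b T h H
  refine le_trans (csInf_le hbdd hmem) ?_
  -- bound the value
  have ha2 : ∀ i, (∑ τ, (g τ i) ^ 2) = (a i) ^ 2 := fun i => by
    rw [ha]; exact (Real.sq_sqrt (Finset.sum_nonneg fun τ _ => sq_nonneg _)).symm
  have hbound : ∀ i, (∑ τ, (g τ i) ^ 2) * (h i)⁻¹ ≤ a i * T / d := by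
    intro i
    rw [ha2 i, hh]
    have hbi := hbpos i
    have hab : a i ≤ b i := by simp [hb]; linarith [hcpos]
    have hbne := (hbpos i).ne'
    have hTne := hTpos.ne'
    have hdne := hdpos.ne'
    have h1 : (a i) ^ 2 * (d * b i / T)⁻¹ = (a i)^2 / b i * (T / d) := by
      rw [inv_div, div_mul_div_comm, mul_div_assoc', mul_comm (d:ℝ) (b i)]
    rw [h1]
    have h2 : (a i)^2 / b i ≤ a i := by
      rw [div_le_iff₀ hbi, sq]
      exact mul_le_mul_of_nonneg_left hab (ha0 i)
    have h3 : (0:ℝ) ≤ T / d := by positivity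
    calc (a i)^2 / b i * (T / d) ≤ a i * (T / d) :=
          mul_le_mul_of_nonneg_right h2 h3
      _ = a i * T / d := by ring
  have hsum : ∑ i, (∑ τ, (g τ i) ^ 2) * (h i)⁻¹ ≤ ∑ i, a i * T / d :=
    Finset.sum_le_sum fun i _ => hbound i
  refine hsum.trans ?_
  have : ∑ i, a i * T / d = S * T / d := by
    rw [hSdef, Finset.sum_mul, Finset.sum_div]
  rw [this, hT]
  have hcS : c * S ≤ ε := by
    rw [hc, div_mul_eq_mul_div, div_le_iff₀ hSpos]
    nlinarith [hε.le]
  have : S * (S + ↑d * c) / ↑d = S^2 / d + c * S * (d/d) := by ring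
  rw [this, div_self hdpos.ne', mul_one]
  have : (1 / (d:ℝ)) * S ^ 2 = S^2 / d := by ring
  rw [this]
  linarith
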